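/- For every p > 1 and all r, s ∈ (0,1), one has arcsin_p(r·s) ≤ √(arcsin_p(r²)·arcsin_p(s²)) ≤ arcsin_p(r)·arcsin_p(s). -/

import Mathlib

open Real

noncomputable def arcsinp (p x : ℝ) : ℝ := ∫ t in (0:ℝ)..x, (1 - t ^ p) ^ (-1 / p)

section helpers
variable {p : ℝ}

lemma one_sub_rpow_pos (hp : 1 < p) {t : ℝ} (ht0 : 0 ≤ t) (ht1 : t < 1) :
    0 < 1 - t ^ p := by
  have : t ^ p < 1 := Real.rpow_lt_one ht0 ht1 (by linarith)
  linarith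

lemma contOn (hp : 1 < p) {b : ℝ} (hb : b < 1) :
    ContinuousOn (fun t : ℝ => (1 - t ^ p) ^ (-1 / p)) (Set.Icc 0 b) := by
  intro t ht
  have hpos : 0 < 1 - t ^ p := one_sub_rpow_pos hp ht.1 (lt_of_le_of_lt ht.2 hb)
  apply ContinuousAt.continuousWithinAt
  have hbase : ContinuousAt (fun t : ℝ => 1 - t ^ p) t :=
    continuousAt_const.sub (Real.continuousAt_rpow_const t p (Or.inr (by linarith)))
  exact ContinuousAt.comp (g := fun y : ℝ => y ^ (-1/p))
    (Real.continuousAt_rpow_const _ _ (Or.inl hpos.ne')) hbase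

lemma integrable_f (hp : 1 < p) {b : ℝ} (hb0 : 0 ≤ b) (hb : b < 1) :
    IntervalIntegrable (fun t : ℝ => (1 - t ^ p) ^ (-1 / p)) MeasureTheory.volume 0 b := by
  apply ContinuousOn.intervalIntegrable
  · rw [Set.uIcc_of_le hb0]; exact contOn hp hb

lemma f_ge_one (hp : 1 < p) {t : ℝ} (ht0 : 0 ≤ t) (ht1 : t < 1) :
    1 ≤ (1 - t ^ p) ^ (-1 / p) := by
  have hpos := one_sub_rpow_pos hp ht0 ht1
  have h1 : 1 - t ^ p ≤ 1 := by
    have : 0 ≤ t ^ p := Real.rpow_nonneg ht0 p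
    linarith
  calc (1:ℝ) = (1:ℝ) ^ (-1/p) := (Real.one_rpow _).symm
    _ ≤ (1 - t ^ p) ^ (-1/p) :=
        Real.rpow_le_rpow_of_nonpos hpos h1 (div_nonpos_iff.mpr (Or.inr ⟨by norm_num, by linarith⟩))

end helpers

section more
variable {p : ℝ}

lemma neg_exp_nonpos (hp : 1 < p) : -1 / p ≤ 0 :=
  div_nonpos_iff.mpr (Or.inr ⟨by norm_num, by linarith⟩)

lemma f_mono (hp : 1 < p) {t t' : ℝ} (ht0 : 0 ≤ t) (htt : t ≤ t') (ht1 : t' < 1) :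
    (1 - t ^ p) ^ (-1 / p) ≤ (1 - t' ^ p) ^ (-1 / p) := by
  have h1 : 0 < 1 - t' ^ p := one_sub_rpow_pos hp (le_trans ht0 htt) ht1
  have h2 : t ^ p ≤ t' ^ p := Real.rpow_le_rpow ht0 htt (by linarith)
  exact Real.rpow_le_rpow_of_nonpos h1 (by linarith) (neg_exp_nonpos hp)

lemma self_le_arcsinp (hp : 1 < p) {x : ℝ} (hx0 : 0 ≤ x) (hx1 : x < 1) :
    x ≤ arcsinp p x := by
  have := intervalIntegral.integral_mono_on (μ := MeasureTheory.volume) hx0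
    (intervalIntegrable_const (c := (1:ℝ))) (integrable_f hp hx0 hx1)
    (fun t ht => f_ge_one hp ht.1 (lt_of_le_of_lt ht.2 hx1))
  simpa [arcsinp] using this

lemma arcsinp_pos (hp : 1 < p) {x : ℝ} (hx0 : 0 < x) (hx1 : x < 1) :
    0 < arcsinp p x := lt_of_lt_of_le hx0 (self_le_arcsinp hp hx0.le hx1)

lemma arcsinp_subst (hp : 1 < p) {c : ℝ} (hc : 0 < c) :
    arcsinp p c = c * ∫ u in (0:ℝ)..1, (1 - (c * u) ^ p) ^ (-1 / p) := by
  rw [arcsinp, intervalIntegral.integral_comp_mul_left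
      (fun t : ℝ => (1 - t ^ p) ^ (-1 / p)) hc.ne', mul_zero, mul_one, smul_eq_mul,
      ← mul_assoc, mul_inv_cancel₀ hc.ne', one_mul]

lemma integrable_g (hp : 1 < p) {c : ℝ} (hc0 : 0 ≤ c) (hc1 : c < 1) :
    IntervalIntegrable (fun u : ℝ => (1 - (c * u) ^ p) ^ (-1 / p))
      MeasureTheory.volume 0 1 := by
  apply ContinuousOn.intervalIntegrable
  rw [Set.uIcc_of_le zero_le_one]
  have : ContinuousOn (fun u : ℝ => c * u) (Set.Icc 0 1) := (continuous_const.mul continuous_id).continuousOn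
  rcases eq_or_lt_of_le hc0 with h | h
  · simp only [← h, zero_mul]
    exact continuousOn_const
  · apply (contOn hp (b := c) hc1).comp this
    intro u hu
    exact ⟨mul_nonneg hc0 hu.1, mul_le_of_le_one_right hc0 hu.2⟩

lemma key_pointwise (hp : 1 < p) {r s u : ℝ} (hr : r ∈ Set.Ioo (0:ℝ) 1)
    (hs : s ∈ Set.Ioo (0:ℝ) 1) (hu : u ∈ Set.Icc (0:ℝ) 1) :
    ((1 - (r * s * u) ^ p) ^ (-1 / p)) ^ 2 ≤
      (1 - (r ^ 2 * u) ^ p) ^ (-1 / p) * (1 - (s ^ 2 * u) ^ p) ^ (-1 / p) := by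
  obtain ⟨hr0, hr1⟩ := hr
  obtain ⟨hs0, hs1⟩ := hs
  obtain ⟨hu0, hu1⟩ := hu
  have hp0 : (0:ℝ) < p := by linarith
  have hab : 0 < 1 - (r * s * u) ^ p := one_sub_rpow_pos hp (by positivity)
    (by nlinarith [mul_le_of_le_one_right (mul_pos hr0 hs0).le hu1])
  have ha : 0 < 1 - (r ^ 2 * u) ^ p := one_sub_rpow_pos hp (by positivity)
    (by nlinarith [mul_le_of_le_one_right (mul_pos hr0 hr0).le hu1, sq r])
  have hb : 0 < 1 - (s ^ 2 * u) ^ p := one_sub_rpow_pos hp (by positivity)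
    (by nlinarith [mul_le_of_le_one_right (mul_pos hs0 hs0).le hu1, sq s])
  have e1 : ((1 - (r * s * u) ^ p) ^ (-1 / p)) ^ 2
      = ((1 - (r * s * u) ^ p) ^ 2) ^ (-1 / p) := by
    rw [← Real.rpow_natCast ((1 - (r*s*u)^p) ^ (-1/p)) 2, ← Real.rpow_natCast (1 - (r*s*u)^p) 2,
      ← Real.rpow_mul hab.le, ← Real.rpow_mul hab.le]
    ring_nf
  have e2 : (1 - (r ^ 2 * u) ^ p) ^ (-1 / p) * (1 - (s ^ 2 * u) ^ p) ^ (-1 / p)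
      = ((1 - (r ^ 2 * u) ^ p) * (1 - (s ^ 2 * u) ^ p)) ^ (-1 / p) :=
    (Real.mul_rpow ha.le hb.le).symm
  rw [e1, e2]
  apply Real.rpow_le_rpow_of_nonpos (by positivity) _ (neg_exp_nonpos hp)
  -- (1 - A²U)(1 - B²U) ≤ (1 - ABU)²  where A = r^p, B = s^p, U = u^p
  have hA : (r ^ 2 * u) ^ p = (r ^ p) ^ 2 * u ^ p := by
    rw [Real.mul_rpow (by positivity) hu0, sq, sq, Real.mul_rpow hr0.le hr0.le]
  have hB : (s ^ 2 * u) ^ p = (s ^ p) ^ 2 * u ^ p := by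
    rw [Real.mul_rpow (by positivity) hu0, sq, sq, Real.mul_rpow hs0.le hs0.le]
  have hAB : (r * s * u) ^ p = (r ^ p) * (s ^ p) * u ^ p := by
    rw [Real.mul_rpow (by positivity) hu0, Real.mul_rpow hr0.le hs0.le]
  rw [hA, hB, hAB]
  nlinarith [mul_nonneg (Real.rpow_nonneg hu0 p) (sq_nonneg (r ^ p - s ^ p))]

end more

lemma arcsinp_sq_le (hp : 1 < p) {x : ℝ} (hx : x ∈ Set.Ioo (0:ℝ) 1) :
    arcsinp p (x ^ 2) ≤ arcsinp p x ^ 2 := by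
  obtain ⟨hx0, hx1⟩ := hx
  have hx2 : 0 < x ^ 2 := by positivity
  have hx21 : x ^ 2 < 1 := by nlinarith
  have hmono : (∫ u in (0:ℝ)..1, (1 - (x ^ 2 * u) ^ p) ^ (-1 / p))
      ≤ ∫ u in (0:ℝ)..1, (1 - (x * u) ^ p) ^ (-1 / p) := by
    apply intervalIntegral.integral_mono_on zero_le_one
      (integrable_g hp hx2.le hx21) (integrable_g hp hx0.le hx1)
    intro u hu
    exact f_mono hp (mul_nonneg hx2.le hu.1)
      (mul_le_mul_of_nonneg_right (by nlinarith) hu.1)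
      (by nlinarith [mul_le_of_le_one_right hx0.le hu.2])
  have e1 := arcsinp_subst (p := p) hp hx2
  have e2 := arcsinp_subst (p := p) hp hx0
  have hxle : x ≤ arcsinp p x := self_le_arcsinp hp hx0.le hx1
  have hI2 : 0 ≤ ∫ u in (0:ℝ)..1, (1 - (x * u) ^ p) ^ (-1 / p) := by
    nlinarith [arcsinp_pos hp hx0 hx1]
  calc arcsinp p (x ^ 2) = x ^ 2 * ∫ u in (0:ℝ)..1, (1 - (x ^ 2 * u) ^ p) ^ (-1 / p) := e1
    _ ≤ x ^ 2 * ∫ u in (0:ℝ)..1, (1 - (x * u) ^ p) ^ (-1 / p) := by nlinarith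
    _ = x * arcsinp p x := by rw [e2]; ring
    _ ≤ arcsinp p x ^ 2 := by nlinarith [arcsinp_pos hp hx0 hx1]

lemma amgm_bound {l x y z : ℝ} (hl : 0 < l) (hx : 1 ≤ x) (hy : 1 ≤ y)
    (hz : 1 ≤ z) (hkey : z ^ 2 ≤ x * y) : z ≤ (l * x + l⁻¹ * y) / 2 := by
  have hli : 0 < l⁻¹ := by positivity
  have hlinv : l * l⁻¹ = 1 := mul_inv_cancel₀ hl.ne'
  have hP : 0 < l * x := mul_pos hl (by linarith)
  have hQ : 0 < l⁻¹ * y := mul_pos hli (by linarith)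
  have hPQ : z ^ 2 ≤ (l * x) * (l⁻¹ * y) := by
    rw [mul_mul_mul_comm, hlinv, one_mul]; exact hkey
  nlinarith [sq_nonneg (l * x - l⁻¹ * y), hPQ, hP, hQ, hz,
    mul_pos (add_pos hP hQ) (lt_of_lt_of_le one_pos hz)]

lemma alg_e1 {r s sa sb Ia : ℝ} (hr0 : 0 < r) (hs0 : 0 < s) (hsa : 0 < sa)
    (hsb : 0 < sb) (ea : sa ^ 2 = r ^ 2 * Ia) :
    (r * s) * ((r * sb / (s * sa)) * Ia) = sa * sb := by
  field_simp
  linear_combination (-1) * ea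

set_option maxHeartbeats 1000000 in
theorem arcsinp_mul_inequalities (p r s : ℝ) (hp : 1 < p)
    (hr : r ∈ Set.Ioo (0:ℝ) 1) (hs : s ∈ Set.Ioo (0:ℝ) 1) :
    arcsinp p (r * s) ≤ Real.sqrt (arcsinp p (r ^ 2) * arcsinp p (s ^ 2)) ∧
      Real.sqrt (arcsinp p (r ^ 2) * arcsinp p (s ^ 2)) ≤ arcsinp p r * arcsinp p s := by
  obtain ⟨hr0, hr1⟩ := hr
  obtain ⟨hs0, hs1⟩ := hs
  have hr2 : 0 < r ^ 2 := by positivity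
  have hr21 : r ^ 2 < 1 := by nlinarith
  have hs2 : 0 < s ^ 2 := by positivity
  have hs21 : s ^ 2 < 1 := by nlinarith
  have hrs0 : 0 < r * s := mul_pos hr0 hs0
  have hrs1 : r * s < 1 := by nlinarith
  have ha : 0 < arcsinp p (r ^ 2) := arcsinp_pos hp hr2 hr21
  have hb : 0 < arcsinp p (s ^ 2) := arcsinp_pos hp hs2 hs21
  have h1 : arcsinp p (r ^ 2) ≤ arcsinp p r ^ 2 := arcsinp_sq_le hp ⟨hr0, hr1⟩
  have h2 : arcsinp p (s ^ 2) ≤ arcsinp p s ^ 2 := arcsinp_sq_le hp ⟨hs0, hs1⟩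
  have ea : arcsinp p (r ^ 2)
      = r ^ 2 * ∫ u in (0:ℝ)..1, (1 - (r ^ 2 * u) ^ p) ^ (-1 / p) := arcsinp_subst hp hr2
  have eb : arcsinp p (s ^ 2)
      = s ^ 2 * ∫ u in (0:ℝ)..1, (1 - (s ^ 2 * u) ^ p) ^ (-1 / p) := arcsinp_subst hp hs2
  have ers : arcsinp p (r * s)
      = (r * s) * ∫ u in (0:ℝ)..1, (1 - (r * s * u) ^ p) ^ (-1 / p) := arcsinp_subst hp hrs0
  have hIrs := integrable_g (p := p) hp hrs0.le hrs1
  have hIa := integrable_g (p := p) hp hr2.le hr21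
  have hIb := integrable_g (p := p) hp hs2.le hs21
  -- make arcsinp values opaque
  obtain ⟨a, hadef⟩ : ∃ x, arcsinp p (r ^ 2) = x := ⟨_, rfl⟩
  obtain ⟨b, hbdef⟩ : ∃ x, arcsinp p (s ^ 2) = x := ⟨_, rfl⟩
  rw [hadef] at ha ea h1
  rw [hbdef] at hb eb h2
  rw [hadef, hbdef]
  obtain ⟨sa, hsad⟩ : ∃ x, Real.sqrt a = x := ⟨_, rfl⟩
  obtain ⟨sb, hsbd⟩ : ∃ x, Real.sqrt b = x := ⟨_, rfl⟩
  have hsa : 0 < sa := hsad ▸ Real.sqrt_pos.mpr ha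
  have hsb : 0 < sb := hsbd ▸ Real.sqrt_pos.mpr hb
  have hsa2 : sa ^ 2 = a := by rw [← hsad]; exact Real.sq_sqrt ha.le
  have hsb2 : sb ^ 2 = b := by rw [← hsbd]; exact Real.sq_sqrt hb.le
  have hsqrt : Real.sqrt (a * b) = sa * sb := by
    rw [Real.sqrt_mul ha.le, hsad, hsbd]
  obtain ⟨l, hld⟩ : ∃ x, r * sb / (s * sa) = x := ⟨_, rfl⟩
  have hl : 0 < l := by rw [← hld]; positivity
  have hlinv : l * l⁻¹ = 1 := mul_inv_cancel₀ hl.ne'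
  have hlinv2 : l⁻¹ = s * sa / (r * sb) := by rw [← hld, inv_div]
  have hli : 0 < l⁻¹ := by positivity
  constructor
  · -- first inequality
    have hcomb : IntervalIntegrable
        (fun u : ℝ => (l * (1 - (r ^ 2 * u) ^ p) ^ (-1 / p)
          + l⁻¹ * (1 - (s ^ 2 * u) ^ p) ^ (-1 / p)) / 2) MeasureTheory.volume 0 1 :=
      ((hIa.const_mul l).add (hIb.const_mul l⁻¹)).div_const 2
    have hptwise : ∀ u ∈ Set.Icc (0:ℝ) 1,
        (1 - (r * s * u) ^ p) ^ (-1 / p) ≤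
          (l * (1 - (r ^ 2 * u) ^ p) ^ (-1 / p)
            + l⁻¹ * (1 - (s ^ 2 * u) ^ p) ^ (-1 / p)) / 2 := by
      intro u hu
      obtain ⟨hu0, hu1⟩ := hu
      have hkey := key_pointwise hp ⟨hr0, hr1⟩ ⟨hs0, hs1⟩ ⟨hu0, hu1⟩
      have hz : (1:ℝ) ≤ (1 - (r * s * u) ^ p) ^ (-1 / p) :=
        f_ge_one hp (by positivity) (by nlinarith [mul_le_of_le_one_right hrs0.le hu1])
      have hx : (1:ℝ) ≤ (1 - (r ^ 2 * u) ^ p) ^ (-1 / p) :=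
        f_ge_one hp (by positivity) (by nlinarith [mul_le_of_le_one_right hr2.le hu1])
      have hy : (1:ℝ) ≤ (1 - (s ^ 2 * u) ^ p) ^ (-1 / p) :=
        f_ge_one hp (by positivity) (by nlinarith [mul_le_of_le_one_right hs2.le hu1])
      exact amgm_bound hl hx hy hz hkey
    have hmono := intervalIntegral.integral_mono_on zero_le_one hIrs hcomb hptwise
    have hval : (∫ u in (0:ℝ)..1, (l * (1 - (r ^ 2 * u) ^ p) ^ (-1 / p)
          + l⁻¹ * (1 - (s ^ 2 * u) ^ p) ^ (-1 / p)) / 2)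
        = (l * ∫ u in (0:ℝ)..1, (1 - (r ^ 2 * u) ^ p) ^ (-1 / p)) / 2
          + (l⁻¹ * ∫ u in (0:ℝ)..1, (1 - (s ^ 2 * u) ^ p) ^ (-1 / p)) / 2 := by
      rw [intervalIntegral.integral_div, intervalIntegral.integral_add
        (hIa.const_mul l) (hIb.const_mul l⁻¹), intervalIntegral.integral_const_mul,
        intervalIntegral.integral_const_mul]
      ring
    rw [hval] at hmono
    obtain ⟨Irs, hIrsd⟩ : ∃ x, (∫ u in (0:ℝ)..1, (1 - (r * s * u) ^ p) ^ (-1 / p)) = x := ⟨_, rfl⟩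
    obtain ⟨Ia, hIad⟩ : ∃ x, (∫ u in (0:ℝ)..1, (1 - (r ^ 2 * u) ^ p) ^ (-1 / p)) = x := ⟨_, rfl⟩
    obtain ⟨Ib, hIbd⟩ : ∃ x, (∫ u in (0:ℝ)..1, (1 - (s ^ 2 * u) ^ p) ^ (-1 / p)) = x := ⟨_, rfl⟩
    rw [hIrsd] at hmono ers
    rw [hIad] at hmono ea
    rw [hIbd] at hmono eb
    have hfinal : (r * s) * ((l * Ia) / 2 + (l⁻¹ * Ib) / 2) = sa * sb := by
      have e1 : (r * s) * (l * Ia) = sa * sb := by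
        rw [← hld]; exact alg_e1 hr0 hs0 hsa hsb (by rw [hsa2]; exact ea)
      have e2 : (r * s) * (l⁻¹ * Ib) = sa * sb := by
        rw [hlinv2, mul_comm sa sb, mul_comm r s]
        exact alg_e1 hs0 hr0 hsb hsa (by rw [hsb2]; exact eb)
      linear_combination e1 / 2 + e2 / 2
    rw [ers, hsqrt]
    calc (r * s) * Irs ≤ (r * s) * (l * Ia / 2 + l⁻¹ * Ib / 2) :=
          mul_le_mul_of_nonneg_left hmono hrs0.le
      _ = sa * sb := by linarith [hfinal]
  · -- second inequality
    have hFr : 0 < arcsinp p r := arcsinp_pos hp hr0 hr1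
    have hFs : 0 < arcsinp p s := arcsinp_pos hp hs0 hs1
    calc Real.sqrt (a * b) ≤ Real.sqrt ((arcsinp p r * arcsinp p s) ^ 2) := by
          apply Real.sqrt_le_sqrt
          rw [mul_pow]
          exact mul_le_mul h1 h2 hb.le (by positivity)
      _ = arcsinp p r * arcsinp p s := Real.sqrt_sq (by positivity)
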